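/- arXiv:2502.10553 — 2 statements merged into one kernel-verified Lean document; each statement's English description precedes it below -/
import Mathlib

section
/- Let q>2 be real and set a(x) = ((q−1)e^x − e^{2x})/(e^x+q−1)³ for x≥0. Let r>2, let φ∈C²([0,∞)) be nonnegative, and assume that w↦w·φ'(w) is nonnegative and nondecreasing on [0,∞) with w·φ'(w)→∞ as w→∞. Define Φ(t) = ∫_{0}^{∞} x^r · e^{−φ(x/t)} · a(x) dx for t>0. Then there is exactly one t_0∈(0,∞) such that Φ(t_0)=0. -/
open MeasureTheory Filter Topology Set

noncomputable def afun (q : ℝ) (x : ℝ) : ℝ :=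
  ((q - 1) * Real.exp x - Real.exp (2 * x)) / (Real.exp x + q - 1) ^ 3

lemma afun_denom_pos {q : ℝ} (hq : 1 < q) (x : ℝ) : 0 < Real.exp x + q - 1 := by
  have := Real.exp_pos x; linarith

lemma afun_continuous {q : ℝ} (hq : 1 < q) : Continuous (afun q) := by
  apply Continuous.div
  · exact (continuous_const.mul Real.continuous_exp).sub (Real.continuous_exp.comp (continuous_const.mul continuous_id))
  · fun_prop
  · intro x
    exact pow_ne_zero _ (afun_denom_pos hq x).ne'

lemma afun_abs_le {q : ℝ} (hq : 2 < q) {x : ℝ} (hx : 0 ≤ x) :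
    |afun q x| ≤ q * Real.exp (-x) := by
  have hd := afun_denom_pos (q := q) (by linarith) x
  have he := Real.exp_pos x
  have h1 : Real.exp x ≤ Real.exp x + q - 1 := by linarith
  have hd3 : Real.exp (3 * x) ≤ (Real.exp x + q - 1) ^ 3 := by
    calc Real.exp (3 * x) = (Real.exp x) ^ 3 := by
          rw [← Real.exp_nat_mul]; norm_num
      _ ≤ (Real.exp x + q - 1) ^ 3 := by
          apply pow_le_pow_left₀ he.le h1
  have hnum : |(q - 1) * Real.exp x - Real.exp (2 * x)| ≤ (q - 1) * Real.exp x + Real.exp (2 * x) := by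
    have := abs_sub ((q-1) * Real.exp x) (Real.exp (2*x))
    calc |(q - 1) * Real.exp x - Real.exp (2 * x)|
        ≤ |(q - 1) * Real.exp x| + |Real.exp (2 * x)| := abs_sub _ _
      _ = (q - 1) * Real.exp x + Real.exp (2 * x) := by
          rw [abs_of_nonneg (mul_nonneg (by linarith) (Real.exp_pos x).le), abs_of_nonneg (Real.exp_pos _).le]
  rw [afun, abs_div, abs_of_nonneg (by positivity : (0:ℝ) ≤ (Real.exp x + q - 1) ^ 3)]
  rw [div_le_iff₀ (by positivity)]
  calc |(q - 1) * Real.exp x - Real.exp (2 * x)|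
      ≤ (q - 1) * Real.exp x + Real.exp (2 * x) := hnum
    _ ≤ q * Real.exp (-x) * Real.exp (3 * x) := by
        rw [mul_assoc, ← Real.exp_add]
        have e1 : -x + 3 * x = 2 * x := by ring
        rw [e1]
        have e2 : Real.exp x ≤ Real.exp (2 * x) := Real.exp_le_exp.mpr (by linarith)
        nlinarith [Real.exp_pos (2*x)]
    _ ≤ q * Real.exp (-x) * (Real.exp x + q - 1) ^ 3 := by
        apply mul_le_mul_of_nonneg_left hd3 (by positivity)

lemma afun_eq {q : ℝ} (x : ℝ) :
    afun q x = Real.exp x * (q - 1 - Real.exp x) / (Real.exp x + q - 1) ^ 3 := by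
  rw [afun]
  congr 1
  rw [two_mul, Real.exp_add]; ring

lemma afun_nonneg {q : ℝ} (hq : 1 < q) {x : ℝ} (hx : Real.exp x ≤ q - 1) : 0 ≤ afun q x := by
  rw [afun_eq]
  apply div_nonneg _ (pow_nonneg (afun_denom_pos hq x).le 3)
  exact mul_nonneg (Real.exp_pos x).le (by linarith)

lemma afun_neg' {q : ℝ} (hq : 1 < q) {x : ℝ} (hx : q - 1 < Real.exp x) : afun q x < 0 := by
  rw [afun_eq]
  apply div_neg_of_neg_of_pos _ (by have := afun_denom_pos hq x; positivity)
  exact mul_neg_of_pos_of_neg (Real.exp_pos x) (by linarith)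

lemma afun_zero_pos {q : ℝ} (hq : 2 < q) : 0 < afun q 0 := by
  rw [afun_eq]
  apply div_pos _ (by have := afun_denom_pos (q := q) (by linarith) 0; positivity)
  rw [Real.exp_zero]
  nlinarith

section Phi
variable {φ : ℝ → ℝ}

lemma phi_hasDerivAt (hφC2 : ContDiffOn ℝ 2 φ (Ici 0)) {u : ℝ} (hu : 0 < u) :
    HasDerivAt φ (deriv φ u) u := by
  have h1 : DifferentiableWithinAt ℝ φ (Ici 0) u :=
    (hφC2.differentiableOn (by norm_num)) u (le_of_lt hu)
  exact (h1.differentiableAt (Ici_mem_nhds hu)).hasDerivAt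

lemma phi_log_lower (hφC2 : ContDiffOn ℝ 2 φ (Ici 0)) {A B c : ℝ} (hA : 0 < A) (hAB : A ≤ B)
    (hc : ∀ u ∈ Icc A B, c ≤ u * deriv φ u) :
    c * (Real.log B - Real.log A) ≤ φ B - φ A := by
  set g : ℝ → ℝ := fun u => φ u - c * Real.log u with hg_def
  have hg : ∀ u : ℝ, 0 < u → HasDerivAt g (deriv φ u - c * u⁻¹) u := fun u hu =>
    (phi_hasDerivAt hφC2 hu).sub ((Real.hasDerivAt_log hu.ne').const_mul c)
  have hmono : MonotoneOn g (Icc A B) := by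
    apply monotoneOn_of_deriv_nonneg (convex_Icc A B)
    · intro u hu
      have hu0 : 0 < u := lt_of_lt_of_le hA hu.1
      exact ((hg u hu0).continuousAt).continuousWithinAt
    · intro u hu
      rw [interior_Icc] at hu
      have hu0 : 0 < u := lt_trans hA hu.1
      exact ((hg u hu0).differentiableAt).differentiableWithinAt
    · intro u hu
      rw [interior_Icc] at hu
      have hu0 : 0 < u := lt_trans hA hu.1
      rw [(hg u hu0).deriv]
      have h := hc u ⟨hu.1.le, hu.2.le⟩
      have h3 : c * u⁻¹ ≤ deriv φ u := by
        rw [show deriv φ u = (u * deriv φ u) * u⁻¹ by field_simp]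
        exact mul_le_mul_of_nonneg_right h (inv_pos.mpr hu0).le
      linarith
  have := hmono (left_mem_Icc.mpr hAB) (right_mem_Icc.mpr hAB) hAB
  simp only [hg_def] at this
  linarith

lemma phi_log_upper (hφC2 : ContDiffOn ℝ 2 φ (Ici 0)) {A B c : ℝ} (hA : 0 < A) (hAB : A ≤ B)
    (hc : ∀ u ∈ Icc A B, u * deriv φ u ≤ c) :
    φ B - φ A ≤ c * (Real.log B - Real.log A) := by
  set g : ℝ → ℝ := fun u => c * Real.log u - φ u with hg_def
  have hg : ∀ u : ℝ, 0 < u → HasDerivAt g (c * u⁻¹ - deriv φ u) u := fun u hu =>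
    ((Real.hasDerivAt_log hu.ne').const_mul c).sub (phi_hasDerivAt hφC2 hu)
  have hmono : MonotoneOn g (Icc A B) := by
    apply monotoneOn_of_deriv_nonneg (convex_Icc A B)
    · intro u hu
      have hu0 : 0 < u := lt_of_lt_of_le hA hu.1
      exact ((hg u hu0).continuousAt).continuousWithinAt
    · intro u hu
      rw [interior_Icc] at hu
      have hu0 : 0 < u := lt_trans hA hu.1
      exact ((hg u hu0).differentiableAt).differentiableWithinAt
    · intro u hu
      rw [interior_Icc] at hu
      have hu0 : 0 < u := lt_trans hA hu.1
      rw [(hg u hu0).deriv]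
      have h := hc u ⟨hu.1.le, hu.2.le⟩
      have h3 : deriv φ u ≤ c * u⁻¹ := by
        rw [show deriv φ u = (u * deriv φ u) * u⁻¹ by field_simp]
        exact mul_le_mul_of_nonneg_right h (inv_pos.mpr hu0).le
      linarith
  have := hmono (left_mem_Icc.mpr hAB) (right_mem_Icc.mpr hAB) hAB
  simp only [hg_def] at this
  linarith

lemma weight_continuousOn (hφC2 : ContDiffOn ℝ 2 φ (Ici 0)) (r : ℝ) :
    ContinuousOn (fun w : ℝ => w ^ r * Real.exp (-(φ w))) (Ioi 0) := by
  apply ContinuousOn.mul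
  · exact fun x hx => ((Real.continuousAt_rpow_const x r (Or.inl (ne_of_gt hx))).continuousWithinAt)
  · exact Real.continuous_exp.comp_continuousOn
      ((hφC2.continuousOn.mono Ioi_subset_Ici_self).neg)

lemma weight_integrable (hφC2 : ContDiffOn ℝ 2 φ (Ici 0))
    (hφnn : ∀ w ∈ Ici (0 : ℝ), 0 ≤ φ w)
    (hψtop : Tendsto (fun w => w * deriv φ w) atTop atTop)
    {r : ℝ} (hr : -1 < r) :
    IntegrableOn (fun w : ℝ => w ^ r * Real.exp (-(φ w))) (Ioi 0) := by
  obtain ⟨M₀, hM₀⟩ := (hψtop.eventually_ge_atTop (r + 2)).exists_forall_of_atTop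
  set M : ℝ := max M₀ 1 with hM_def
  have hM1 : (1:ℝ) ≤ M := le_max_right _ _
  have hM0 : (0:ℝ) < M := lt_of_lt_of_le one_pos hM1
  have hsplit : Ioi (0:ℝ) = Ioc 0 M ∪ Ioi M := (Ioc_union_Ioi_eq_Ioi hM0.le).symm
  rw [hsplit, integrableOn_union]
  constructor
  · -- on Ioc 0 M, bound by w ^ r
    have hbd : ∀ w ∈ Ioc (0:ℝ) M, ‖w ^ r * Real.exp (-(φ w))‖ ≤ w ^ r := by
      intro w hw
      have h1 : Real.exp (-(φ w)) ≤ 1 := by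
        rw [Real.exp_le_one_iff]
        simpa using hφnn w (le_of_lt hw.1)
      rw [Real.norm_eq_abs, abs_of_nonneg (mul_nonneg (Real.rpow_nonneg hw.1.le r) (Real.exp_pos _).le)]
      nlinarith [Real.rpow_nonneg hw.1.le r, Real.exp_pos (-(φ w))]
    apply Integrable.mono' (g := fun w : ℝ => w ^ r)
    · exact (intervalIntegrable_iff_integrableOn_Ioc_of_le hM0.le).mp (intervalIntegral.intervalIntegrable_rpow' hr)
    · exact ((weight_continuousOn hφC2 r).mono (Ioc_subset_Ioi_self)).aestronglyMeasurable
        measurableSet_Ioc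
    · exact (ae_restrict_iff' measurableSet_Ioc).mpr (Eventually.of_forall hbd)
  · -- on Ioi M
    set C : ℝ := Real.exp (-(φ M)) * M ^ (r + 2) with hC_def
    have hbd : ∀ w ∈ Ioi M, ‖w ^ r * Real.exp (-(φ w))‖ ≤ C * w ^ (-2 : ℝ) := by
      intro w hw
      have hw0 : 0 < w := lt_trans hM0 hw
      have hlog := phi_log_lower hφC2 hM0 (le_of_lt hw)
        (fun u hu => hM₀ u (le_trans (le_max_left _ _) hu.1))
      -- φ w ≥ φ M + (r+2)(log w − log M)
      have hexp : Real.exp (-(φ w)) ≤ Real.exp (-(φ M)) * (M ^ (r+2) * w ^ (-(r+2))) := by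
        have h2 : Real.exp (-(φ w)) ≤ Real.exp (-(φ M) - (r+2) * (Real.log w - Real.log M)) := by
          apply Real.exp_le_exp.mpr; linarith
        calc Real.exp (-(φ w)) ≤ Real.exp (-(φ M) - (r+2) * (Real.log w - Real.log M)) := h2
          _ = Real.exp (-(φ M)) * (M ^ (r+2) * w ^ (-(r+2))) := by
              rw [Real.rpow_def_of_pos hM0, Real.rpow_def_of_pos hw0, ← Real.exp_add,
                ← Real.exp_add]
              congr 1
              ring
      rw [Real.norm_eq_abs, abs_of_nonneg (by positivity)]
      calc w ^ r * Real.exp (-(φ w)) ≤ w ^ r * (Real.exp (-(φ M)) * (M ^ (r+2) * w ^ (-(r+2)))) :=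
            mul_le_mul_of_nonneg_left hexp (Real.rpow_nonneg hw0.le r)
        _ = C * w ^ (-2 : ℝ) := by
            rw [show w ^ r * (Real.exp (-(φ M)) * (M ^ (r+2) * w ^ (-(r+2)))) =
                Real.exp (-(φ M)) * M ^ (r+2) * (w ^ r * w ^ (-(r+2))) by ring,
              ← Real.rpow_add hw0, show r + -(r+2) = (-2 : ℝ) by ring]
    apply Integrable.mono' (g := fun w : ℝ => C * w ^ (-2 : ℝ))
    · exact (integrableOn_Ioi_rpow_of_lt (by norm_num) hM0).const_mul C
    · exact ((weight_continuousOn hφC2 r).mono (Ioi_subset_Ioi hM0.le)).aestronglyMeasurable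
        measurableSet_Ioi
    · exact (ae_restrict_iff' measurableSet_Ioi).mpr (Eventually.of_forall hbd)

end Phi

section Main

variable {q r : ℝ} {φ : ℝ → ℝ}

/-- base integrable: x^r e^{-x} on Ioi 0 -/
lemma base_integrable {r : ℝ} (hr : -1 < r) :
    IntegrableOn (fun x : ℝ => x ^ r * Real.exp (-x)) (Ioi 0) := by
  have h := Real.GammaIntegral_convergent (s := r + 1) (by linarith)
  apply h.congr_fun _ measurableSet_Ioi
  intro x _
  rw [add_sub_cancel_right]
  ring

/-- the integrand of F t -/
noncomputable def Fint (q r : ℝ) (φ : ℝ → ℝ) (t : ℝ) (x : ℝ) : ℝ :=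
  x ^ r * Real.exp (-(φ (x / t))) * afun q x

lemma Fint_contOn (hq : 2 < q) (hφC2 : ContDiffOn ℝ 2 φ (Ici 0)) {t : ℝ} (ht : 0 < t) :
    ContinuousOn (Fint q r φ t) (Ioi 0) := by
  apply ContinuousOn.mul
  apply ContinuousOn.mul
  · exact fun x hx => (Real.continuousAt_rpow_const x r (Or.inl (ne_of_gt hx))).continuousWithinAt
  · apply Real.continuous_exp.comp_continuousOn
    apply ContinuousOn.neg
    apply hφC2.continuousOn.comp (continuousOn_id.div_const t)
    intro x hx
    exact div_nonneg (le_of_lt hx) ht.le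
  · exact (afun_continuous (by linarith)).continuousOn

lemma Fint_bound (hq : 2 < q)
    (hφnn : ∀ w ∈ Ici (0 : ℝ), 0 ≤ φ w) {t : ℝ} (ht : 0 < t) {x : ℝ} (hx : x ∈ Ioi (0:ℝ)) :
    ‖Fint q r φ t x‖ ≤ q * (x ^ r * Real.exp (-x)) := by
  have hx0 : (0:ℝ) < x := hx
  have h1 : Real.exp (-(φ (x / t))) ≤ 1 := by
    rw [Real.exp_le_one_iff]
    simpa using hφnn (x / t) (div_nonneg hx0.le ht.le)
  have h2 := afun_abs_le hq hx0.le
  rw [Fint, Real.norm_eq_abs, abs_mul, abs_mul,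
    abs_of_nonneg (Real.rpow_nonneg hx0.le r), abs_of_nonneg (Real.exp_pos _).le]
  calc x ^ r * Real.exp (-(φ (x / t))) * |afun q x|
      ≤ x ^ r * 1 * (q * Real.exp (-x)) := by
        apply mul_le_mul _ h2 (abs_nonneg _) (by positivity)
        exact mul_le_mul_of_nonneg_left h1 (Real.rpow_nonneg hx0.le r)
    _ = q * (x ^ r * Real.exp (-x)) := by ring

lemma Fint_integrable (hq : 2 < q) (hr : 2 < r) (hφC2 : ContDiffOn ℝ 2 φ (Ici 0))
    (hφnn : ∀ w ∈ Ici (0 : ℝ), 0 ≤ φ w) {t : ℝ} (ht : 0 < t) :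
    IntegrableOn (Fint q r φ t) (Ioi 0) := by
  apply Integrable.mono' (((base_integrable (r := r) (by linarith)).const_mul q))
  · exact (Fint_contOn hq hφC2 ht).aestronglyMeasurable measurableSet_Ioi
  · exact (ae_restrict_iff' measurableSet_Ioi).mpr
      (Eventually.of_forall fun x hx => Fint_bound hq hφnn ht hx)

/-- I = ∫ x^r a(x) < 0 -/
lemma I_neg (hq : 2 < q) (hr : 2 < r) :
    (∫ x in Ioi (0:ℝ), x ^ r * afun q x) < 0 := by
  have hq1 : (1:ℝ) < q := by linarith
  have hDpos : ∀ x : ℝ, 0 < Real.exp x + q - 1 := afun_denom_pos hq1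
  set f : ℝ → ℝ := fun x => (Real.exp x + q - 1)⁻¹ with hfdef
  set f1 : ℝ → ℝ := fun x => -Real.exp x / (Real.exp x + q - 1) ^ 2 with hf1def
  set g : ℝ → ℝ := fun x => x ^ r * f1 x - r * x ^ (r-1) * f x with hgdef
  set k0 : ℝ → ℝ := fun x => x ^ (r-2) * f x with hk0def
  set h : ℝ → ℝ := fun x => x ^ r * afun q x with hhdef
  have hDf : ∀ x : ℝ, HasDerivAt (fun y => Real.exp y + q - 1) (Real.exp x) x := fun x =>
    ((Real.hasDerivAt_exp x).add_const q).sub_const 1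
  have hff : ∀ x : ℝ, HasDerivAt f (f1 x) x := fun x => (hDf x).inv (hDpos x).ne'
  have hf1f : ∀ x : ℝ, HasDerivAt f1 (-(afun q x)) x := by
    intro x
    have hd2 : HasDerivAt (fun y => (Real.exp y + q - 1) ^ 2)
        (2 * (Real.exp x + q - 1) ^ 1 * Real.exp x) x := by
      simpa using (hDf x).fun_pow 2
    have hc : HasDerivAt (fun y => -Real.exp y) (-Real.exp x) x := (Real.hasDerivAt_exp x).neg
    have hres := hc.fun_div hd2 (pow_ne_zero 2 (hDpos x).ne')
    refine hres.congr_deriv ?_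
    rw [afun, two_mul x, Real.exp_add]
    have hD0 := (hDpos x).ne'
    field_simp
    ring
  -- bounds for f, f1
  have hfpos : ∀ x : ℝ, 0 < f x := fun x => inv_pos.mpr (hDpos x)
  have hfb : ∀ x : ℝ, f x ≤ Real.exp (-x) := by
    intro x
    rw [Real.exp_neg, hfdef]
    exact inv_anti₀ (Real.exp_pos x) (by linarith)
  have hf1b : ∀ x : ℝ, |f1 x| ≤ Real.exp (-x) := by
    intro x
    rw [hf1def]
    have hD := hDpos x
    have he := Real.exp_pos x
    rw [abs_div, abs_neg, abs_of_nonneg he.le, abs_of_nonneg (by positivity : (0:ℝ) ≤ (Real.exp x + q - 1)^2)]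
    rw [div_le_iff₀ (by positivity), Real.exp_neg]
    rw [inv_mul_eq_div, le_div_iff₀ he]
    calc Real.exp x * Real.exp x = (Real.exp x) ^ 2 := by ring
      _ ≤ (Real.exp x + q - 1) ^ 2 := by apply pow_le_pow_left₀ he.le (by linarith)
  -- integrability
  have hInt_h : IntegrableOn h (Ioi 0) := by
    apply Integrable.mono' ((base_integrable (r := r) (by linarith)).const_mul q)
    · apply ContinuousOn.aestronglyMeasurable _ measurableSet_Ioi
      apply ContinuousOn.mul
      · exact fun x hx => (Real.continuousAt_rpow_const x r (Or.inl (ne_of_gt hx))).continuousWithinAt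
      · exact (afun_continuous hq1).continuousOn
    · apply (ae_restrict_iff' measurableSet_Ioi).mpr
      apply Eventually.of_forall
      intro x hx
      have hx0 : (0:ℝ) < x := hx
      rw [Real.norm_eq_abs, hhdef, abs_mul, abs_of_nonneg (Real.rpow_nonneg hx0.le r)]
      calc x ^ r * |afun q x| ≤ x ^ r * (q * Real.exp (-x)) :=
            mul_le_mul_of_nonneg_left (afun_abs_le hq hx0.le) (Real.rpow_nonneg hx0.le r)
        _ = q * (x ^ r * Real.exp (-x)) := by ring
  have hcontf : Continuous f := by
    apply Continuous.inv₀ (by fun_prop) (fun x => (hDpos x).ne')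
  have hInt_k0 : IntegrableOn k0 (Ioi 0) := by
    apply Integrable.mono' (base_integrable (r := r - 2) (by linarith))
    · apply ContinuousOn.aestronglyMeasurable _ measurableSet_Ioi
      apply ContinuousOn.mul
      · exact fun x hx => (Real.continuousAt_rpow_const x (r-2) (Or.inl (ne_of_gt hx))).continuousWithinAt
      · exact hcontf.continuousOn
    · apply (ae_restrict_iff' measurableSet_Ioi).mpr
      apply Eventually.of_forall
      intro x hx
      have hx0 : (0:ℝ) < x := hx
      rw [Real.norm_eq_abs, hk0def, abs_mul, abs_of_nonneg (Real.rpow_nonneg hx0.le (r-2)),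
        abs_of_nonneg (hfpos x).le]
      exact mul_le_mul_of_nonneg_left (hfb x) (Real.rpow_nonneg hx0.le (r-2))
  -- derivative of g
  have hgg : ∀ x ∈ Ioi (0:ℝ), HasDerivAt g (-(h x) - (r*(r-1)) * k0 x) x := by
    intro x hx
    have hx0 : (0:ℝ) < x := hx
    have hrp : HasDerivAt (fun y : ℝ => y ^ r) (r * x ^ (r-1)) x :=
      Real.hasDerivAt_rpow_const (Or.inl hx0.ne')
    have hrp1 : HasDerivAt (fun y : ℝ => y ^ (r-1)) ((r-1) * x ^ (r-2)) x := by
      have := Real.hasDerivAt_rpow_const (x := x) (p := r - 1) (Or.inl hx0.ne')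
      convert this using 2
      ring
    have h1 : HasDerivAt (fun y => y ^ r * f1 y)
        (r * x ^ (r-1) * f1 x + x ^ r * (-(afun q x))) x := hrp.mul (hf1f x)
    have h2 : HasDerivAt (fun y => r * y ^ (r-1) * f y)
        (r * ((r-1) * x ^ (r-2)) * f x + r * x ^ (r-1) * f1 x) x :=
      (hrp1.const_mul r).mul (hff x)
    have := h1.fun_sub h2
    refine this.congr_deriv ?_
    rw [hhdef, hk0def]
    ring
  -- continuity of g at 0
  have hcontf1 : Continuous f1 := by
    apply Continuous.div (by fun_prop) (by fun_prop) (fun x => pow_ne_zero 2 (hDpos x).ne')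
  have hgcont : ContinuousWithinAt g (Ici 0) 0 := by
    apply ContinuousAt.continuousWithinAt
    apply ContinuousAt.sub
    · exact (Real.continuousAt_rpow_const 0 r (Or.inr (by linarith))).mul hcontf1.continuousAt
    · exact (continuousAt_const.mul (Real.continuousAt_rpow_const 0 (r-1) (Or.inr (by linarith)))).mul
        hcontf.continuousAt
  -- limit of g at infinity
  have hgtop : Tendsto g atTop (𝓝 0) := by
    have hbnd : ∀ᶠ x in atTop, ‖g x‖ ≤ x ^ r * Real.exp (-x) + r * (x ^ (r-1) * Real.exp (-x)) := by
      filter_upwards [Ioi_mem_atTop (0:ℝ)] with x hx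
      have hx0 : (0:ℝ) < x := hx
      rw [Real.norm_eq_abs, hgdef]
      calc |x ^ r * f1 x - r * x ^ (r-1) * f x| ≤ |x ^ r * f1 x| + |r * x ^ (r-1) * f x| := abs_sub _ _
        _ ≤ x ^ r * Real.exp (-x) + r * (x ^ (r-1) * Real.exp (-x)) := by
            apply add_le_add
            · rw [abs_mul, abs_of_nonneg (Real.rpow_nonneg hx0.le r)]
              exact mul_le_mul_of_nonneg_left (hf1b x) (Real.rpow_nonneg hx0.le r)
            · rw [abs_mul, abs_mul, abs_of_nonneg (by linarith : (0:ℝ) ≤ r),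
                abs_of_nonneg (Real.rpow_nonneg hx0.le (r-1)), abs_of_nonneg (hfpos x).le, mul_assoc]
              apply mul_le_mul_of_nonneg_left _ (by linarith : (0:ℝ) ≤ r)
              exact mul_le_mul_of_nonneg_left (hfb x) (Real.rpow_nonneg hx0.le (r-1))
    have htend : Tendsto (fun x : ℝ => x ^ r * Real.exp (-x) + r * (x ^ (r-1) * Real.exp (-x))) atTop (𝓝 0) := by
      have t1 := tendsto_rpow_mul_exp_neg_mul_atTop_nhds_zero r 1 one_pos
      have t2 := tendsto_rpow_mul_exp_neg_mul_atTop_nhds_zero (r-1) 1 one_pos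
      simp only [neg_mul, one_mul] at t1 t2
      simpa using t1.add (t2.const_mul r)
    exact squeeze_zero_norm' hbnd htend
  -- FTC
  have hg0 : g 0 = 0 := by
    rw [hgdef]
    simp [Real.zero_rpow (by linarith : r ≠ 0), Real.zero_rpow (by intro hc; rw [sub_eq_zero] at hc; linarith : r - 1 ≠ 0)]
  have hInt_g' : IntegrableOn (fun x => -(h x) - (r*(r-1)) * k0 x) (Ioi (0:ℝ)) :=
    hInt_h.neg.sub (hInt_k0.const_mul _)
  have hFTC := integral_Ioi_of_hasDerivAt_of_tendsto hgcont hgg hInt_g' hgtop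
  rw [hg0, sub_zero] at hFTC
  -- rearrange
  have hInt_nh : IntegrableOn (fun x => -(h x)) (Ioi (0:ℝ)) := hInt_h.neg
  have heq : (∫ x in Ioi (0:ℝ), (-(h x) - (r*(r-1)) * k0 x))
      = (∫ x in Ioi (0:ℝ), -(h x)) - ∫ x in Ioi (0:ℝ), (r*(r-1)) * k0 x :=
    integral_sub hInt_nh (hInt_k0.const_mul _)
  rw [heq, integral_neg, integral_const_mul] at hFTC
  have hk0pos : 0 < ∫ x in Ioi (0:ℝ), k0 x := by
    rw [setIntegral_pos_iff_support_of_nonneg_ae _ hInt_k0]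
    · apply lt_of_lt_of_le _ (measure_mono (show Ioi (1:ℝ) ⊆ Function.support k0 ∩ Ioi 0 by
        intro x hx
        have hx0 : (0:ℝ) < x := lt_trans one_pos hx
        constructor
        · exact ne_of_gt (mul_pos (Real.rpow_pos_of_pos hx0 _) (hfpos x))
        · exact hx0))
      rw [Real.volume_Ioi]
      norm_num
    · apply (ae_restrict_iff' measurableSet_Ioi).mpr
      apply Eventually.of_forall
      intro x hx
      exact (mul_pos (Real.rpow_pos_of_pos hx _) (hfpos x)).le
  have : (∫ x in Ioi (0:ℝ), h x) = -((r*(r-1)) * ∫ x in Ioi (0:ℝ), k0 x) := by linarith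
  rw [show (∫ x in Ioi (0:ℝ), x ^ r * afun q x) = ∫ x in Ioi (0:ℝ), h x from rfl, this]
  have : 0 < r * (r-1) := by nlinarith
  nlinarith

/-- continuity of t ↦ F t on (0,∞) -/
lemma F_continuousAt (hq : 2 < q) (hr : 2 < r) (hφC2 : ContDiffOn ℝ 2 φ (Ici 0))
    (hφnn : ∀ w ∈ Ici (0 : ℝ), 0 ≤ φ w) {t₀ : ℝ} (ht₀ : 0 < t₀) :
    ContinuousAt (fun t => ∫ x in Ioi (0:ℝ), Fint q r φ t x) t₀ := by
  have hev : ∀ᶠ t in 𝓝 t₀, 0 < t := eventually_gt_nhds ht₀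
  apply continuousAt_of_dominated (bound := fun x => q * (x ^ r * Real.exp (-x)))
  · filter_upwards [hev] with t ht
    exact (Fint_contOn hq hφC2 ht).aestronglyMeasurable measurableSet_Ioi
  · filter_upwards [hev] with t ht
    exact (ae_restrict_iff' measurableSet_Ioi).mpr
      (Eventually.of_forall fun x hx => Fint_bound hq hφnn ht hx)
  · exact (base_integrable (r := r) (by linarith)).const_mul q
  · apply (ae_restrict_iff' measurableSet_Ioi).mpr
    apply Eventually.of_forall
    intro x hx
    have hx0 : (0:ℝ) < x := hx
    have hstep : ContinuousAt (fun t : ℝ => x / t) t₀ :=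
      continuousAt_const.div continuousAt_id ht₀.ne'
    have hφat : ContinuousAt φ (x / t₀) :=
      hφC2.continuousOn.continuousAt (Ici_mem_nhds (by positivity))
    have hcomp : ContinuousAt (fun t : ℝ => φ (x / t)) t₀ := hφat.comp hstep
    have hexp : ContinuousAt (fun t : ℝ => Real.exp (-(φ (x / t)))) t₀ :=
      Real.continuous_exp.continuousAt.comp hcomp.neg
    exact (continuousAt_const.mul hexp).mul continuousAt_const

/-- limit as t → ∞ is e^{-φ 0} * I -/
lemma F_tendsto_atTop (hq : 2 < q) (hr : 2 < r) (hφC2 : ContDiffOn ℝ 2 φ (Ici 0))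
    (hφnn : ∀ w ∈ Ici (0 : ℝ), 0 ≤ φ w) :
    Tendsto (fun t => ∫ x in Ioi (0:ℝ), Fint q r φ t x) atTop
      (𝓝 (Real.exp (-(φ 0)) * ∫ x in Ioi (0:ℝ), x ^ r * afun q x)) := by
  have hlim : Tendsto (fun t => ∫ x in Ioi (0:ℝ), Fint q r φ t x) atTop
      (𝓝 (∫ x in Ioi (0:ℝ), x ^ r * Real.exp (-(φ 0)) * afun q x)) := by
    apply tendsto_integral_filter_of_dominated_convergence
      (bound := fun x => q * (x ^ r * Real.exp (-x)))
    · filter_upwards [Ioi_mem_atTop (0:ℝ)] with t ht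
      exact (Fint_contOn hq hφC2 ht).aestronglyMeasurable measurableSet_Ioi
    · filter_upwards [Ioi_mem_atTop (0:ℝ)] with t ht
      exact (ae_restrict_iff' measurableSet_Ioi).mpr
        (Eventually.of_forall fun x hx => Fint_bound hq hφnn ht hx)
    · exact (base_integrable (r := r) (by linarith)).const_mul q
    · apply (ae_restrict_iff' measurableSet_Ioi).mpr
      apply Eventually.of_forall
      intro x hx
      have hx0 : (0:ℝ) < x := hx
      have hdiv : Tendsto (fun t : ℝ => x / t) atTop (𝓝[Ici 0] 0) := by
        rw [tendsto_nhdsWithin_iff]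
        constructor
        · exact tendsto_const_nhds.div_atTop tendsto_id
        · filter_upwards [Ioi_mem_atTop (0:ℝ)] with t ht
          exact div_nonneg hx0.le (le_of_lt ht)
      have hφ0 : ContinuousWithinAt φ (Ici 0) 0 := hφC2.continuousOn 0 (mem_Ici.mpr le_rfl)
      have hcomp : Tendsto (fun t : ℝ => φ (x / t)) atTop (𝓝 (φ 0)) :=
        hφ0.tendsto.comp hdiv
      have hexp : Tendsto (fun t : ℝ => Real.exp (-(φ (x / t)))) atTop
          (𝓝 (Real.exp (-(φ 0)))) :=
        (Real.continuous_exp.continuousAt.tendsto).comp hcomp.neg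
      exact (hexp.const_mul (x ^ r)).mul_const (afun q x)
  convert hlim using 2
  rw [show (fun x : ℝ => x ^ r * Real.exp (-(φ 0)) * afun q x)
      = fun x : ℝ => Real.exp (-(φ 0)) * (x ^ r * afun q x) from funext fun x => by ring,
    integral_const_mul]

/-- existence of t with F t > 0 (small t) -/
lemma F_pos_small (hq : 2 < q) (hr : 2 < r) (hφC2 : ContDiffOn ℝ 2 φ (Ici 0))
    (hφnn : ∀ w ∈ Ici (0 : ℝ), 0 ≤ φ w)
    (hψtop : Tendsto (fun w => w * deriv φ w) atTop atTop) :
    ∃ t : ℝ, 0 < t ∧ 0 < ∫ x in Ioi (0:ℝ), Fint q r φ t x := by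
  have hq1 : (1:ℝ) < q := by linarith
  -- change of variables
  have hCOV : ∀ t : ℝ, 0 < t → (∫ x in Ioi (0:ℝ), Fint q r φ t x)
      = t * (t ^ r * ∫ w in Ioi (0:ℝ), w ^ r * Real.exp (-(φ w)) * afun q (t * w)) := by
    intro t ht
    have h1 := integral_comp_mul_left_Ioi (Fint q r φ t) 0 ht
    rw [mul_zero] at h1
    have h2 : (∫ x in Ioi (0:ℝ), Fint q r φ t x)
        = t * ∫ w in Ioi (0:ℝ), Fint q r φ t (t * w) := by
      rw [h1, smul_eq_mul, ← mul_assoc, mul_inv_cancel₀ ht.ne', one_mul]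
    rw [h2]
    congr 1
    have h3 : ∀ w ∈ Ioi (0:ℝ), Fint q r φ t (t * w)
        = t ^ r * (w ^ r * Real.exp (-(φ w)) * afun q (t * w)) := by
      intro w hw
      have hw0 : (0:ℝ) < w := hw
      rw [Fint, Real.mul_rpow ht.le hw0.le, mul_comm t w, mul_div_assoc, div_self ht.ne',
        mul_one]
      ring
    rw [setIntegral_congr_fun measurableSet_Ioi h3, integral_const_mul]
  -- weight integral
  have hWint := weight_integrable hφC2 hφnn hψtop (show (-1:ℝ) < r by linarith)
  have hWpos : 0 < ∫ w in Ioi (0:ℝ), w ^ r * Real.exp (-(φ w)) := by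
    rw [setIntegral_pos_iff_support_of_nonneg_ae _ hWint]
    · apply lt_of_lt_of_le _ (measure_mono (show Ioi (1:ℝ) ⊆
          Function.support (fun w : ℝ => w ^ r * Real.exp (-(φ w))) ∩ Ioi 0 by
        intro w hw
        have hw0 : (0:ℝ) < w := lt_trans one_pos hw
        exact ⟨ne_of_gt (mul_pos (Real.rpow_pos_of_pos hw0 r) (Real.exp_pos _)), hw0⟩))
      rw [Real.volume_Ioi]
      norm_num
    · apply (ae_restrict_iff' measurableSet_Ioi).mpr
      apply Eventually.of_forall
      intro w hw
      exact (mul_pos (Real.rpow_pos_of_pos hw r) (Real.exp_pos _)).le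
  -- dominated convergence as t → 0+
  have hG : Tendsto (fun t => ∫ w in Ioi (0:ℝ), w ^ r * Real.exp (-(φ w)) * afun q (t * w))
      (𝓝[>] (0:ℝ)) (𝓝 (∫ w in Ioi (0:ℝ), w ^ r * Real.exp (-(φ w)) * afun q 0)) := by
    apply tendsto_integral_filter_of_dominated_convergence
      (bound := fun w => q * (w ^ r * Real.exp (-(φ w))))
    · filter_upwards [self_mem_nhdsWithin] with t (ht : (0:ℝ) < t)
      apply ContinuousOn.aestronglyMeasurable _ measurableSet_Ioi
      exact (weight_continuousOn hφC2 r).mul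
        ((afun_continuous hq1).comp (continuous_const.mul continuous_id)).continuousOn
    · filter_upwards [self_mem_nhdsWithin] with t (ht : (0:ℝ) < t)
      apply (ae_restrict_iff' measurableSet_Ioi).mpr
      apply Eventually.of_forall
      intro w hw
      have hw0 : (0:ℝ) < w := hw
      have htw : (0:ℝ) ≤ t * w := by positivity
      rw [Real.norm_eq_abs, abs_mul,
        abs_of_nonneg (mul_nonneg (Real.rpow_nonneg hw0.le r) (Real.exp_pos _).le)]
      calc w ^ r * Real.exp (-(φ w)) * |afun q (t * w)|
          ≤ w ^ r * Real.exp (-(φ w)) * (q * Real.exp (-(t * w))) := by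
            apply mul_le_mul_of_nonneg_left (afun_abs_le hq htw)
              (mul_nonneg (Real.rpow_nonneg hw0.le r) (Real.exp_pos _).le)
        _ ≤ w ^ r * Real.exp (-(φ w)) * (q * 1) := by
            apply mul_le_mul_of_nonneg_left _
              (mul_nonneg (Real.rpow_nonneg hw0.le r) (Real.exp_pos _).le)
            apply mul_le_mul_of_nonneg_left _ (by linarith : (0:ℝ) ≤ q)
            rw [Real.exp_le_one_iff]
            linarith
        _ = q * (w ^ r * Real.exp (-(φ w))) := by ring
    · exact hWint.const_mul q
    · apply (ae_restrict_iff' measurableSet_Ioi).mpr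
      apply Eventually.of_forall
      intro w hw
      have hmul : Tendsto (fun t : ℝ => t * w) (𝓝[>] (0:ℝ)) (𝓝 0) := by
        have : Tendsto (fun t : ℝ => t * w) (𝓝 (0:ℝ)) (𝓝 (0 * w)) :=
          (continuous_mul_right w).continuousAt
        rw [zero_mul] at this
        exact this.mono_left nhdsWithin_le_nhds
      have haf : Tendsto (fun t : ℝ => afun q (t * w)) (𝓝[>] (0:ℝ)) (𝓝 (afun q 0)) :=
        ((afun_continuous hq1).continuousAt).tendsto.comp hmul
      exact haf.const_mul (w ^ r * Real.exp (-(φ w)))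
  have hlimpos : 0 < ∫ w in Ioi (0:ℝ), w ^ r * Real.exp (-(φ w)) * afun q 0 := by
    rw [integral_mul_const]
    exact mul_pos hWpos (afun_zero_pos hq)
  have hev : ∀ᶠ t in 𝓝[>] (0:ℝ),
      0 < ∫ w in Ioi (0:ℝ), w ^ r * Real.exp (-(φ w)) * afun q (t * w) :=
    hG.eventually (eventually_gt_nhds hlimpos)
  obtain ⟨t, htpos, htG⟩ := (hev.and self_mem_nhdsWithin).exists
  refine ⟨t, htG, ?_⟩
  rw [hCOV t htG]
  have : (0:ℝ) < t ^ r := Real.rpow_pos_of_pos htG r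
  positivity

/-- strict single crossing -/
lemma F_crossing (hq : 2 < q) (hr : 2 < r) (hφC2 : ContDiffOn ℝ 2 φ (Ici 0))
    (hφnn : ∀ w ∈ Ici (0 : ℝ), 0 ≤ φ w)
    (hψmono : MonotoneOn (fun w => w * deriv φ w) (Ici 0))
    (hψtop : Tendsto (fun w => w * deriv φ w) atTop atTop)
    {t₁ t₂ : ℝ} (ht₁ : 0 < t₁) (h12 : t₁ < t₂)
    (hF1 : (∫ x in Ioi (0:ℝ), Fint q r φ t₁ x) ≤ 0) :
    (∫ x in Ioi (0:ℝ), Fint q r φ t₂ x) < 0 := by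
  have hq1 : (1:ℝ) < q := by linarith
  have ht₂ : 0 < t₂ := lt_trans ht₁ h12
  set x₀ : ℝ := Real.log (q - 1) with hx₀def
  have hx₀pos : 0 < x₀ := Real.log_pos (by linarith)
  have hexpx₀ : Real.exp x₀ = q - 1 := Real.exp_log (by linarith)
  set h : ℝ → ℝ := fun x => φ (x / t₁) - φ (x / t₂) with hhdef
  -- ratio identity
  have hratio : ∀ x : ℝ, Fint q r φ t₂ x = Real.exp (h x) * Fint q r φ t₁ x := by
    intro x
    have e1 : Real.exp (h x) * Real.exp (-(φ (x / t₁))) = Real.exp (-(φ (x / t₂))) := by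
      rw [← Real.exp_add]
      congr 1
      simp only [hhdef]
      ring
    calc Fint q r φ t₂ x = x ^ r * Real.exp (-(φ (x / t₂))) * afun q x := rfl
      _ = x ^ r * (Real.exp (h x) * Real.exp (-(φ (x / t₁)))) * afun q x := by rw [e1]
      _ = Real.exp (h x) * Fint q r φ t₁ x := by rw [Fint]; ring
  -- derivative of h
  have hDh : ∀ x : ℝ, 0 < x →
      HasDerivAt h (deriv φ (x / t₁) * (1 / t₁) - deriv φ (x / t₂) * (1 / t₂)) x := by
    intro x hx
    have hd1 : HasDerivAt (fun x : ℝ => x / t₁) (1 / t₁) x := (hasDerivAt_id x).div_const t₁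
    have hd2 : HasDerivAt (fun x : ℝ => x / t₂) (1 / t₂) x := (hasDerivAt_id x).div_const t₂
    have h1 : HasDerivAt (fun x : ℝ => φ (x / t₁)) (deriv φ (x / t₁) * (1 / t₁)) x :=
      (phi_hasDerivAt hφC2 (div_pos hx ht₁)).comp x hd1
    have h2 : HasDerivAt (fun x : ℝ => φ (x / t₂)) (deriv φ (x / t₂) * (1 / t₂)) x :=
      (phi_hasDerivAt hφC2 (div_pos hx ht₂)).comp x hd2
    exact h1.sub h2
  -- monotonicity of h on Ici 0
  have hmono_h : MonotoneOn h (Ici 0) := by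
    apply monotoneOn_of_deriv_nonneg (convex_Ici 0)
    · apply ContinuousOn.sub
      · exact hφC2.continuousOn.comp (continuousOn_id.div_const t₁)
          (fun x hx => div_nonneg hx ht₁.le)
      · exact hφC2.continuousOn.comp (continuousOn_id.div_const t₂)
          (fun x hx => div_nonneg hx ht₂.le)
    · intro x hx
      rw [interior_Ici] at hx
      exact ((hDh x hx).differentiableAt).differentiableWithinAt
    · intro x hx
      rw [interior_Ici] at hx
      rw [(hDh x hx).deriv]
      have hle : x / t₂ ≤ x / t₁ := div_le_div_of_nonneg_left (le_of_lt hx) ht₁ h12.le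
      have hm := hψmono (mem_Ici.mpr (div_nonneg hx.le ht₂.le))
        (mem_Ici.mpr (div_nonneg hx.le ht₁.le)) hle
      dsimp only at hm
      have hxx : x / t₂ * deriv φ (x / t₂) = x * (deriv φ (x / t₂) * (1 / t₂)) := by ring
      have hyy : x / t₁ * deriv φ (x / t₁) = x * (deriv φ (x / t₁) * (1 / t₁)) := by ring
      rw [hxx, hyy] at hm
      have := (mul_le_mul_iff_right₀ hx).mp hm
      linarith
  -- strictness point X
  set c₂ : ℝ := (x₀ / t₁) * deriv φ (x₀ / t₁) with hc₂def
  obtain ⟨W₀, hW₀⟩ := (hψtop.eventually_ge_atTop (c₂ + 1)).exists_forall_of_atTop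
  set X : ℝ := max (x₀ + 1) (t₂ * W₀) with hXdef
  have hXx₀ : x₀ < X := lt_of_lt_of_le (by linarith) (le_max_left _ _)
  have hX0 : 0 < X := lt_trans hx₀pos hXx₀
  have hXt₂ : W₀ ≤ X / t₂ := by
    rw [le_div_iff₀ ht₂]
    calc W₀ * t₂ = t₂ * W₀ := by ring
      _ ≤ X := le_max_right _ _
  have hlow : (c₂ + 1) * (Real.log (X / t₁) - Real.log (X / t₂)) ≤ φ (X / t₁) - φ (X / t₂) :=
    phi_log_lower hφC2 (div_pos hX0 ht₂) (div_le_div_of_nonneg_left hX0.le ht₁ h12.le)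
      (fun u hu => hW₀ u (le_trans hXt₂ hu.1))
  have hup : φ (x₀ / t₁) - φ (x₀ / t₂) ≤ c₂ * (Real.log (x₀ / t₁) - Real.log (x₀ / t₂)) :=
    phi_log_upper hφC2 (div_pos hx₀pos ht₂) (div_le_div_of_nonneg_left hx₀pos.le ht₁ h12.le)
      (fun u hu => hψmono (mem_Ici.mpr (le_trans (div_nonneg hx₀pos.le ht₂.le) hu.1))
        (mem_Ici.mpr (div_nonneg hx₀pos.le ht₁.le)) hu.2)
  have hL1 : Real.log (X / t₁) - Real.log (X / t₂) = Real.log t₂ - Real.log t₁ := by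
    rw [Real.log_div hX0.ne' ht₁.ne', Real.log_div hX0.ne' ht₂.ne']
    ring
  have hL2 : Real.log (x₀ / t₁) - Real.log (x₀ / t₂) = Real.log t₂ - Real.log t₁ := by
    rw [Real.log_div hx₀pos.ne' ht₁.ne', Real.log_div hx₀pos.ne' ht₂.ne']
    ring
  have hLpos : 0 < Real.log t₂ - Real.log t₁ := sub_pos.mpr (Real.log_lt_log ht₁ h12)
  rw [hL1] at hlow
  rw [hL2] at hup
  have hstrict : h x₀ < h X := by
    simp only [hhdef]
    nlinarith
  -- sign facts for g₁
  have hg1_nonneg : ∀ x ∈ Ioc (0:ℝ) x₀, 0 ≤ Fint q r φ t₁ x := by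
    intro x hx
    apply mul_nonneg (mul_nonneg (Real.rpow_nonneg hx.1.le r) (Real.exp_pos _).le)
    apply afun_nonneg hq1
    rw [← hexpx₀]
    exact Real.exp_le_exp.mpr hx.2
  have hg1_neg : ∀ x : ℝ, x₀ < x → Fint q r φ t₁ x < 0 := by
    intro x hx
    have hx0 : (0:ℝ) < x := lt_trans hx₀pos hx
    apply mul_neg_of_pos_of_neg (mul_pos (Real.rpow_pos_of_pos hx0 r) (Real.exp_pos _))
    apply afun_neg' hq1
    rw [← hexpx₀]
    exact Real.exp_lt_exp.mpr hx
  -- integrability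
  have hI1 := Fint_integrable hq hr hφC2 hφnn ht₁
  have hI2 := Fint_integrable hq hr hφC2 hφnn ht₂
  have hI1a : IntegrableOn (Fint q r φ t₁) (Ioc 0 X) := hI1.mono_set Ioc_subset_Ioi_self
  have hI1b : IntegrableOn (Fint q r φ t₁) (Ioi X) := hI1.mono_set (Ioi_subset_Ioi hX0.le)
  have hI2a : IntegrableOn (Fint q r φ t₂) (Ioc 0 X) := hI2.mono_set Ioc_subset_Ioi_self
  have hI2b : IntegrableOn (Fint q r φ t₂) (Ioi X) := hI2.mono_set (Ioi_subset_Ioi hX0.le)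
  -- negative tail integral for g₁
  have hintneg : (∫ x in Ioi X, Fint q r φ t₁ x) < 0 := by
    have hpos : 0 < ∫ x in Ioi X, -Fint q r φ t₁ x := by
      rw [setIntegral_pos_iff_support_of_nonneg_ae _ hI1b.neg']
      · apply lt_of_lt_of_le _ (measure_mono (show Ioi X ⊆
            Function.support (fun x => -Fint q r φ t₁ x) ∩ Ioi X by
          intro x hx
          refine ⟨?_, hx⟩
          exact ne_of_gt (neg_pos.mpr (hg1_neg x (lt_trans hXx₀ hx)))))
        rw [Real.volume_Ioi]
        norm_num
      · apply (ae_restrict_iff' measurableSet_Ioi).mpr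
        apply Eventually.of_forall
        intro x hx
        exact (neg_pos.mpr (hg1_neg x (lt_trans hXx₀ hx))).le
    rw [integral_neg] at hpos
    linarith
  -- pointwise comparisons
  have hpw1 : ∀ x ∈ Ioc (0:ℝ) X, Fint q r φ t₂ x ≤ Real.exp (h x₀) * Fint q r φ t₁ x := by
    intro x hx
    rw [hratio x]
    rcases le_or_gt x x₀ with hc | hc
    · apply mul_le_mul_of_nonneg_right _ (hg1_nonneg x ⟨hx.1, hc⟩)
      exact Real.exp_le_exp.mpr (hmono_h (mem_Ici.mpr hx.1.le) (mem_Ici.mpr hx₀pos.le) hc)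
    · apply mul_le_mul_of_nonpos_right _ (hg1_neg x hc).le
      exact Real.exp_le_exp.mpr (hmono_h (mem_Ici.mpr hx₀pos.le) (mem_Ici.mpr (lt_trans hx₀pos hc).le) hc.le)
  have hpw2 : ∀ x ∈ Ioi X, Fint q r φ t₂ x ≤ Real.exp (h X) * Fint q r φ t₁ x := by
    intro x hx
    have hxX : X ≤ x := (le_of_lt hx)
    rw [hratio x]
    apply mul_le_mul_of_nonpos_right _ (hg1_neg x (lt_of_lt_of_le hXx₀ hxX)).le
    exact Real.exp_le_exp.mpr (hmono_h (mem_Ici.mpr hX0.le)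
      (mem_Ici.mpr (lt_of_lt_of_le hX0 hxX).le) hxX)
  -- integral splits
  have hsplit2 : (∫ x in Ioi (0:ℝ), Fint q r φ t₂ x)
      = (∫ x in Ioc 0 X, Fint q r φ t₂ x) + ∫ x in Ioi X, Fint q r φ t₂ x := by
    rw [← setIntegral_union (Ioc_disjoint_Ioi le_rfl) measurableSet_Ioi hI2a hI2b,
      Ioc_union_Ioi_eq_Ioi hX0.le]
  have hsplit1 : (∫ x in Ioi (0:ℝ), Fint q r φ t₁ x)
      = (∫ x in Ioc 0 X, Fint q r φ t₁ x) + ∫ x in Ioi X, Fint q r φ t₁ x := by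
    rw [← setIntegral_union (Ioc_disjoint_Ioi le_rfl) measurableSet_Ioi hI1a hI1b,
      Ioc_union_Ioi_eq_Ioi hX0.le]
  -- integral estimates
  have hest1 : (∫ x in Ioc 0 X, Fint q r φ t₂ x)
      ≤ Real.exp (h x₀) * ∫ x in Ioc 0 X, Fint q r φ t₁ x := by
    rw [← integral_const_mul]
    exact setIntegral_mono_on hI2a (hI1a.const_mul _) measurableSet_Ioc hpw1
  have hest2 : (∫ x in Ioi X, Fint q r φ t₂ x)
      ≤ Real.exp (h X) * ∫ x in Ioi X, Fint q r φ t₁ x := by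
    rw [← integral_const_mul]
    exact setIntegral_mono_on hI2b (hI1b.const_mul _) measurableSet_Ioi hpw2
  have hest3 : Real.exp (h X) * (∫ x in Ioi X, Fint q r φ t₁ x)
      < Real.exp (h x₀) * ∫ x in Ioi X, Fint q r φ t₁ x :=
    mul_lt_mul_of_neg_right (Real.exp_lt_exp.mpr hstrict) hintneg
  have hKS : Real.exp (h x₀) * (∫ x in Ioi (0:ℝ), Fint q r φ t₁ x) ≤ 0 :=
    mul_nonpos_iff.mpr (Or.inl ⟨(Real.exp_pos _).le, hF1⟩)
  have hdist : Real.exp (h x₀) * ((∫ x in Ioc 0 X, Fint q r φ t₁ x)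
        + ∫ x in Ioi X, Fint q r φ t₁ x)
      = Real.exp (h x₀) * (∫ x in Ioc 0 X, Fint q r φ t₁ x)
        + Real.exp (h x₀) * ∫ x in Ioi X, Fint q r φ t₁ x := by ring
  rw [hsplit1] at hKS
  rw [hdist] at hKS
  linarith [hsplit2, hest1, hest2, hest3]

end Main

/-- **Unique zero of `Φ`, case `b = 0`, `c = ∞`, `r > 2`.** -/
theorem unique_zero_crossing_fullline
    (q : ℝ) (hq : 2 < q) (r : ℝ) (hr : 2 < r)
    (φ : ℝ → ℝ) (hφC2 : ContDiffOn ℝ 2 φ (Ici 0))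
    (hφnn : ∀ w ∈ Ici (0 : ℝ), 0 ≤ φ w)
    (hψnn : ∀ w ∈ Ici (0 : ℝ), 0 ≤ w * deriv φ w)
    (hψmono : MonotoneOn (fun w => w * deriv φ w) (Ici 0))
    (hψtop : Tendsto (fun w => w * deriv φ w) atTop atTop) :
    ∃! t : ℝ, 0 < t ∧
      (∫ x in Ioi (0 : ℝ), x ^ r * Real.exp (-(φ (x / t))) * afun q x) = 0 := by
  have key : ∀ t : ℝ, (∫ x in Ioi (0 : ℝ), x ^ r * Real.exp (-(φ (x / t))) * afun q x)
      = ∫ x in Ioi (0:ℝ), Fint q r φ t x := fun t => rfl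
  obtain ⟨ta, hta, hFa⟩ := F_pos_small hq hr hφC2 hφnn hψtop
  have hL : Real.exp (-(φ 0)) * (∫ x in Ioi (0:ℝ), x ^ r * afun q x) < 0 :=
    mul_neg_of_pos_of_neg (Real.exp_pos _) (I_neg hq hr)
  have hev : ∀ᶠ t in atTop, (∫ x in Ioi (0:ℝ), Fint q r φ t x) < 0 :=
    (F_tendsto_atTop hq hr hφC2 hφnn).eventually (eventually_lt_nhds hL)
  obtain ⟨tb, htb⟩ := (hev.and (eventually_ge_atTop (ta + 1))).exists
  have hab : ta < tb := by linarith [htb.2]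
  have htb0 : 0 < tb := lt_trans hta hab
  have hcont : ContinuousOn (fun t => ∫ x in Ioi (0:ℝ), Fint q r φ t x) (Icc ta tb) :=
    fun t ht => (F_continuousAt hq hr hφC2 hφnn (lt_of_lt_of_le hta ht.1)).continuousWithinAt
  have hmem : (0:ℝ) ∈ Icc (∫ x in Ioi (0:ℝ), Fint q r φ tb x)
      (∫ x in Ioi (0:ℝ), Fint q r φ ta x) := ⟨htb.1.le, hFa.le⟩
  obtain ⟨t₀, ht₀mem, ht₀⟩ := intermediate_value_Icc' hab.le hcont hmem
  have ht₀' : (∫ x in Ioi (0:ℝ), Fint q r φ t₀ x) = 0 := ht₀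
  have ht₀pos : 0 < t₀ := lt_of_lt_of_le hta ht₀mem.1
  refine ⟨t₀, ⟨ht₀pos, ?_⟩, ?_⟩
  · rw [key t₀]
    exact ht₀'
  · rintro t' ⟨ht'pos, ht'zero⟩
    rw [key t'] at ht'zero
    by_contra hne
    rcases lt_or_gt_of_ne hne with hlt | hgt
    · have hcr := F_crossing hq hr hφC2 hφnn hψmono hψtop ht'pos hlt (le_of_eq ht'zero)
      rw [ht₀'] at hcr
      exact absurd hcr (lt_irrefl 0)
    · have hcr := F_crossing hq hr hφC2 hφnn hψmono hψtop ht₀pos hgt (le_of_eq ht₀')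
      rw [ht'zero] at hcr
      exact absurd hcr (lt_irrefl 0)
end

section
/- Fix an integer q≥3 and 0≤B<log(q−1). Let W be a random variable whose distribution is supported inside a compact interval [w',w] with w'>0, and assume w/w' ≤ 1 + log(2+√3)/(log(q−1)−B). Define 𝓕_B(t)=E[(W/E[W])·(e^{tW+B}−1)/(e^{tW+B}+q−1)] for t≥0. Then t↦𝓕_B''(t) is first positive and then negative: there exists t_*>0 such that 𝓕_B''(t)>0 for 0<t<t_* and 𝓕_B''(t)<0 for t>t_*. -/
open MeasureTheory Filter Topology Set

namespace SSZC

noncomputable def G (c x : ℝ) : ℝ := (Real.exp x - 1) / (Real.exp x + c)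
noncomputable def G1 (c x : ℝ) : ℝ := (c + 1) * Real.exp x / (Real.exp x + c) ^ 2
noncomputable def G2 (c x : ℝ) : ℝ :=
  (c + 1) * Real.exp x * (c - Real.exp x) / (Real.exp x + c) ^ 3
noncomputable def G3 (c x : ℝ) : ℝ :=
  (c + 1) * Real.exp x * (Real.exp x ^ 2 - 4 * c * Real.exp x + c ^ 2) / (Real.exp x + c) ^ 4

lemma den_pos {c : ℝ} (hc : 2 ≤ c) (x : ℝ) : 0 < Real.exp x + c := by
  linarith [Real.exp_pos x]

lemma hasDerivAt_G {c : ℝ} (hc : 2 ≤ c) (x : ℝ) : HasDerivAt (G c) (G1 c x) x := by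
  have hd : Real.exp x + c ≠ 0 := ne_of_gt (den_pos hc x)
  have h := ((Real.hasDerivAt_exp x).sub_const 1).div
    ((Real.hasDerivAt_exp x).add_const c) hd
  refine h.congr_deriv ?_
  unfold G1; field_simp; ring

lemma hasDerivAt_G1 {c : ℝ} (hc : 2 ≤ c) (x : ℝ) : HasDerivAt (G1 c) (G2 c x) x := by
  have hd : (Real.exp x + c) ^ 2 ≠ 0 := pow_ne_zero _ (ne_of_gt (den_pos hc x))
  have h := (((Real.hasDerivAt_exp x).const_mul (c + 1)).div
    (((Real.hasDerivAt_exp x).add_const c).pow 2) hd)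
  refine h.congr_deriv ?_
  unfold G2; simp only [Pi.pow_apply, Nat.cast_ofNat, Nat.reduceSub]
  have hd' : Real.exp x + c ≠ 0 := ne_of_gt (den_pos hc x)
  field_simp
  ring

lemma hasDerivAt_G2 {c : ℝ} (hc : 2 ≤ c) (x : ℝ) : HasDerivAt (G2 c) (G3 c x) x := by
  have hd' : Real.exp x + c ≠ 0 := ne_of_gt (den_pos hc x)
  have hd : (Real.exp x + c) ^ 3 ≠ 0 := pow_ne_zero _ hd'
  have hnum : HasDerivAt (fun y => (c + 1) * Real.exp y * (c - Real.exp y))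
      ((c + 1) * Real.exp x * (c - Real.exp x) + ((c + 1) * Real.exp x) * (- Real.exp x)) x :=
    ((Real.hasDerivAt_exp x).const_mul (c + 1)).mul ((Real.hasDerivAt_exp x).const_sub c)
  have h := hnum.div (((Real.hasDerivAt_exp x).add_const c).pow 3) hd
  refine h.congr_deriv ?_
  unfold G3; simp only [Pi.pow_apply, Nat.cast_ofNat, Nat.reduceSub]
  field_simp
  ring

end SSZC

namespace SSZC2
open SSZC

lemma abs_div_le {a b C : ℝ} (hb : 0 < b) (h : |a| ≤ C * b) : |a / b| ≤ C := by
  rw [abs_div, abs_of_pos hb, div_le_iff₀ hb]; exact h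

lemma G_abs_le {c : ℝ} (hc : 2 ≤ c) (x : ℝ) : |G c x| ≤ 1 := by
  have hu := Real.exp_pos x
  exact abs_div_le (den_pos hc x) (abs_le.mpr ⟨by nlinarith, by nlinarith⟩)

lemma G1_abs_le {c : ℝ} (hc : 2 ≤ c) (x : ℝ) : |G1 c x| ≤ 2 := by
  have hu := Real.exp_pos x
  have hd := den_pos hc x
  exact abs_div_le (by positivity) (abs_le.mpr ⟨by nlinarith, by nlinarith⟩)

lemma G2_abs_le {c : ℝ} (hc : 2 ≤ c) (x : ℝ) : |G2 c x| ≤ 2 := by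
  have hu := Real.exp_pos x
  have hd := den_pos hc x
  have hc0 : (0:ℝ) < c := by linarith
  refine abs_div_le (by positivity) (abs_le.mpr ⟨?_, ?_⟩) <;>
    nlinarith [mul_nonneg (mul_nonneg hu.le hc0.le) (by linarith : (0:ℝ) ≤ c - 2),
      mul_nonneg (mul_nonneg hu.le hu.le) (by linarith : (0:ℝ) ≤ c - 2),
      mul_nonneg (mul_nonneg hu.le hu.le) hu.le,
      mul_nonneg (mul_nonneg hu.le hu.le) hc0.le,
      mul_nonneg (mul_nonneg hu.le hc0.le) hc0.le,
      mul_nonneg (mul_nonneg hc0.le hc0.le) hc0.le, sq_nonneg (Real.exp x),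
      mul_nonneg hu.le hc0.le]

lemma G3_abs_le {c : ℝ} (hc : 2 ≤ c) (x : ℝ) : |G3 c x| ≤ 8 := by
  have hu := Real.exp_pos x
  have hd := den_pos hc x
  have hc0 : (0:ℝ) < c := by linarith
  set u := Real.exp x with hu_def
  have A1 : |u ^ 2 - 4 * c * u + c ^ 2| ≤ 4 * (u + c) ^ 2 := by
    refine abs_le.mpr ⟨?_, ?_⟩ <;> nlinarith [mul_nonneg hu.le hc0.le, sq_nonneg u, sq_nonneg c]
  have A2 : (c + 1) * u ≤ 2 * (u + c) ^ 2 := by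
    nlinarith [mul_nonneg hu.le hc0.le, sq_nonneg u, sq_nonneg c]
  have A0 : (0:ℝ) ≤ (c + 1) * u := by positivity
  have key : |(c + 1) * u * (u ^ 2 - 4 * c * u + c ^ 2)| ≤ 8 * (u + c) ^ 4 := by
    rw [abs_mul, abs_of_nonneg A0]
    calc (c + 1) * u * |u ^ 2 - 4 * c * u + c ^ 2|
        ≤ (2 * (u + c) ^ 2) * (4 * (u + c) ^ 2) :=
          mul_le_mul A2 A1 (abs_nonneg _) (by positivity)
      _ = 8 * (u + c) ^ 4 := by ring
  exact abs_div_le (by positivity) key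

lemma G2_pos {c x : ℝ} (hc : 2 ≤ c) (h : Real.exp x < c) : 0 < G2 c x := by
  have hu := Real.exp_pos x
  have hd := den_pos hc x
  exact div_pos (mul_pos (mul_pos (by linarith) hu) (by linarith)) (by positivity)

lemma G2_nonneg {c x : ℝ} (hc : 2 ≤ c) (h : Real.exp x ≤ c) : 0 ≤ G2 c x := by
  have hu := Real.exp_pos x
  have hd := den_pos hc x
  exact div_nonneg (mul_nonneg (mul_nonneg (by linarith) hu.le) (by linarith)) (by positivity)

lemma G2_neg {c x : ℝ} (hc : 2 ≤ c) (h : c < Real.exp x) : G2 c x < 0 := by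
  have hu := Real.exp_pos x
  have hd := den_pos hc x
  exact div_neg_of_neg_of_pos
    (mul_neg_of_pos_of_neg (mul_pos (by linarith) hu) (by linarith)) (by positivity)

lemma G3_neg {c x : ℝ} (hc : 2 ≤ c)
    (h1 : Real.log c - Real.log (2 + Real.sqrt 3) < x)
    (h2 : x < Real.log c + Real.log (2 + Real.sqrt 3)) : G3 c x < 0 := by
  have hu := Real.exp_pos x
  have hd := den_pos hc x
  have hc0 : (0:ℝ) < c := by linarith
  have hs : Real.sqrt 3 ^ 2 = 3 := Real.sq_sqrt (by norm_num)
  have hs0 : 0 < Real.sqrt 3 := Real.sqrt_pos.mpr (by norm_num)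
  have h23 : (0:ℝ) < 2 + Real.sqrt 3 := by linarith
  have hub : Real.exp x < c * (2 + Real.sqrt 3) := by
    have := Real.exp_lt_exp.mpr h2
    rw [Real.exp_add, Real.exp_log hc0, Real.exp_log h23] at this
    linarith
  have hlb : c * (2 - Real.sqrt 3) < Real.exp x := by
    have h' := Real.exp_lt_exp.mpr h1
    rw [Real.exp_sub, Real.exp_log hc0, Real.exp_log h23] at h'
    have heq : c * (2 - Real.sqrt 3) = c / (2 + Real.sqrt 3) := by
      rw [eq_div_iff (ne_of_gt h23)]
      nlinarith
    linarith [heq ▸ h']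
  have key : Real.exp x ^ 2 - 4 * c * Real.exp x + c ^ 2 < 0 := by
    nlinarith [mul_pos (sub_pos.mpr hlb) (sub_pos.mpr hub)]
  exact div_neg_of_neg_of_pos
    (mul_neg_of_pos_of_neg (mul_pos (by linarith) hu) key) (by positivity)

end SSZC2

namespace SSZC3
open SSZC SSZC2

variable {Ω : Type*} [MeasurableSpace Ω] {μ : Measure Ω} [IsProbabilityMeasure μ]

lemma integrable_of_bound {f : Ω → ℝ} (hm : AEStronglyMeasurable f μ) {C : ℝ}
    (h : ∀ᵐ ω ∂μ, |f ω| ≤ C) : Integrable f μ :=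
  (integrable_const C).mono' hm (h.mono fun ω hω => by simpa [Real.norm_eq_abs] using hω)

lemma integral_pos_of_ae_pos {f : Ω → ℝ} (hf : Integrable f μ)
    (h : ∀ᵐ ω ∂μ, 0 < f ω) : 0 < ∫ ω, f ω ∂μ := by
  rw [integral_pos_iff_support_of_nonneg_ae (h.mono fun ω hω => hω.le) hf]
  have hnull : μ {ω | ¬ 0 < f ω} = 0 := h
  have hsub : (Function.support f)ᶜ ⊆ {ω | ¬ 0 < f ω} := by
    intro ω hω
    simp only [Function.mem_support, not_not, mem_compl_iff] at hω
    simp [hω]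
  have hc : μ (Function.support f)ᶜ = 0 := measure_mono_null hsub hnull
  by_contra hpos
  push_neg at hpos
  have hz : μ (Function.support f) = 0 := le_antisymm (by simpa using hpos) zero_le
  have : μ univ ≤ μ (Function.support f) + μ (Function.support f)ᶜ := by
    rw [← union_compl_self (Function.support f)]
    exact measure_union_le _ _
  rw [hz, hc, measure_univ] at this
  simp at this

lemma integral_neg_of_ae_neg {f : Ω → ℝ} (hf : Integrable f μ)
    (h : ∀ᵐ ω ∂μ, f ω < 0) : ∫ ω, f ω ∂μ < 0 := by
  have := integral_pos_of_ae_pos hf.neg (h.mono fun ω hω => by simpa using hω)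
  simp only [Pi.neg_apply, integral_neg] at this
  linarith

/-- Differentiation under the integral sign, specialized to our setting. -/
lemma hasDerivAt_int {W A : Ω → ℝ} (hW : Measurable W) (hA : Measurable A)
    {MW MA : ℝ} (hbd : ∀ᵐ ω ∂μ, |W ω| ≤ MW ∧ |A ω| ≤ MA)
    {K K' : ℝ → ℝ} (hK : ∀ x, HasDerivAt K (K' x) x) (hK'c : Continuous K')
    {CK CK' : ℝ} (hKb : ∀ x, |K x| ≤ CK) (hK'b : ∀ x, |K' x| ≤ CK')
    (B : ℝ) (t₀ : ℝ) :
    HasDerivAt (fun t => ∫ ω, A ω * K (t * W ω + B) ∂μ)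
      (∫ ω, (A ω * W ω) * K' (t₀ * W ω + B) ∂μ) t₀ := by
  have hKc : Continuous K := by
    rw [continuous_iff_continuousAt]; exact fun x => (hK x).continuousAt
  have hmeas : ∀ t : ℝ, AEStronglyMeasurable (fun ω => A ω * K (t * W ω + B)) μ := by
    intro t
    exact (hA.mul (hKc.measurable.comp ((hW.const_mul t).add_const B))).aestronglyMeasurable
  have hmeas' : ∀ t : ℝ, AEStronglyMeasurable (fun ω => (A ω * W ω) * K' (t * W ω + B)) μ := by
    intro t
    exact ((hA.mul hW).mul
      (hK'c.measurable.comp ((hW.const_mul t).add_const B))).aestronglyMeasurable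
  have hint : Integrable (fun ω => A ω * K (t₀ * W ω + B)) μ := by
    refine integrable_of_bound (hmeas t₀) (C := MA * CK) (hbd.mono fun ω hω => ?_)
    rw [abs_mul]
    exact mul_le_mul hω.2 (hKb _) (abs_nonneg _) ((abs_nonneg _).trans hω.2)
  have hres := hasDerivAt_integral_of_dominated_loc_of_deriv_le (s := Metric.ball t₀ 1)
    (bound := fun _ => MA * MW * CK')
    (F := fun t ω => A ω * K (t * W ω + B))
    (F' := fun t ω => (A ω * W ω) * K' (t * W ω + B))
    (Metric.ball_mem_nhds t₀ one_pos) (Eventually.of_forall hmeas) hint (hmeas' t₀)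
    (hbd.mono fun ω hω t _ => by
      rw [Real.norm_eq_abs, abs_mul, abs_mul]
      exact mul_le_mul
        (mul_le_mul hω.2 hω.1 (abs_nonneg _) ((abs_nonneg _).trans hω.2)) (hK'b _)
        (abs_nonneg _)
        (mul_nonneg ((abs_nonneg _).trans hω.2) ((abs_nonneg _).trans hω.1)))
    (integrable_const _)
    (Eventually.of_forall fun ω t _ => by
      have h1 : HasDerivAt (fun t : ℝ => t * W ω + B) (W ω) t :=
        (hasDerivAt_mul_const (W ω)).add_const B
      have h2 := ((hK (t * W ω + B)).comp t h1).const_mul (A ω)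
      refine h2.congr_deriv ?_
      ring)
  exact hres.2

end SSZC3

/-- The function `𝓕_B(t) = E[(W/E[W])·(e^{tW+B}−1)/(e^{tW+B}+q−1)]`. -/
noncomputable def Ffun {Ω : Type*} [MeasurableSpace Ω] (μ : Measure Ω)
    (W : Ω → ℝ) (q : ℕ) (B : ℝ) (t : ℝ) : ℝ :=
  ∫ ω, (W ω / (∫ ω', W ω' ∂μ)) * (Real.exp (t * W ω + B) - 1) /
    (Real.exp (t * W ω + B) + q - 1) ∂μ

open SSZC SSZC2 SSZC3 in
/-- **Weights with small support** satisfy the unique zero-crossing condition: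
`𝓕_B''` is first positive and then negative. -/
theorem small_support_zero_crossing
    {Ω : Type*} [MeasurableSpace Ω] (μ : Measure Ω) [IsProbabilityMeasure μ]
    (W : Ω → ℝ) (hWmeas : Measurable W)
    (q : ℕ) (hq : 3 ≤ q) (B : ℝ) (hB0 : 0 ≤ B) (hB1 : B < Real.log (q - 1))
    (w' w : ℝ) (hw' : 0 < w') (hsupp : ∀ᵐ ω ∂μ, W ω ∈ Icc w' w)
    (hratio : w / w' ≤ 1 + Real.log (2 + Real.sqrt 3) / (Real.log (q - 1) - B)) :
    ∃ tstar : ℝ, 0 < tstar ∧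
      (∀ t : ℝ, 0 < t → t < tstar → 0 < deriv (deriv (Ffun μ W q B)) t) ∧
      (∀ t : ℝ, tstar < t → deriv (deriv (Ffun μ W q B)) t < 0) := by
  classical
  have hq3 : (3:ℝ) ≤ (q:ℝ) := by exact_mod_cast hq
  set c : ℝ := (q:ℝ) - 1 with hc_def
  have hc : 2 ≤ c := by simp only [hc_def]; linarith
  have hc0 : (0:ℝ) < c := by linarith
  have hL : 0 < Real.log (2 + Real.sqrt 3) :=
    Real.log_pos (by nlinarith [Real.sqrt_nonneg 3])
  set L := Real.log (2 + Real.sqrt 3) with hL_def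
  set ℓ := Real.log c - B with hl_def
  have hℓ : 0 < ℓ := by simp only [hl_def]; linarith
  -- support facts
  have hμae : (ae μ).NeBot := ae_neBot.mpr (IsProbabilityMeasure.ne_zero μ)
  obtain ⟨ω₀, hω₀⟩ := hsupp.exists
  have hw'w : w' ≤ w := le_trans hω₀.1 hω₀.2
  have hw0 : 0 < w := lt_of_lt_of_le hw' hw'w
  -- integral of W
  have hWabs : ∀ᵐ ω ∂μ, |W ω| ≤ w :=
    hsupp.mono fun ω hω => by rw [abs_of_pos (lt_of_lt_of_le hw' hω.1)]; exact hω.2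
  have hWint : Integrable W μ := integrable_of_bound hWmeas.aestronglyMeasurable hWabs
  set I : ℝ := ∫ ω', W ω' ∂μ with hI_def
  have hIpos : 0 < I :=
    integral_pos_of_ae_pos hWint (hsupp.mono fun ω hω => lt_of_lt_of_le hw' hω.1)
  -- the integrand families
  set A1 : Ω → ℝ := fun ω => W ω / I with hA1_def
  have hA1meas : Measurable A1 := hWmeas.div_const I
  have hA2meas : Measurable (fun ω => A1 ω * W ω) := hA1meas.mul hWmeas
  have hA3meas : Measurable (fun ω => (A1 ω * W ω) * W ω) := hA2meas.mul hWmeas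
  have hbd1 : ∀ᵐ ω ∂μ, |W ω| ≤ w ∧ |A1 ω| ≤ w / I := by
    filter_upwards [hsupp, hWabs] with ω hω habs
    refine ⟨habs, ?_⟩
    rw [hA1_def, abs_div, abs_of_pos hIpos]
    exact (div_le_div_iff_of_pos_right hIpos).mpr habs
  have hbd2 : ∀ᵐ ω ∂μ, |W ω| ≤ w ∧ |A1 ω * W ω| ≤ (w / I) * w := by
    filter_upwards [hbd1] with ω hω
    refine ⟨hω.1, ?_⟩
    rw [abs_mul]
    exact mul_le_mul hω.2 hω.1 (abs_nonneg _) (by positivity)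
  have hbd3 : ∀ᵐ ω ∂μ, |W ω| ≤ w ∧ |(A1 ω * W ω) * W ω| ≤ ((w / I) * w) * w := by
    filter_upwards [hbd2] with ω hω
    refine ⟨hω.1, ?_⟩
    rw [abs_mul]
    exact mul_le_mul hω.2 hω.1 (abs_nonneg _) (by positivity)
  -- continuity of the G's
  have hG1c : Continuous (G1 c) := by
    rw [continuous_iff_continuousAt]; exact fun x => (hasDerivAt_G1 hc x).continuousAt
  have hG2c : Continuous (G2 c) := by
    rw [continuous_iff_continuousAt]; exact fun x => (hasDerivAt_G2 hc x).continuousAt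
  have hG3c : Continuous (G3 c) := by
    apply Continuous.div
    · exact (continuous_const.mul Real.continuous_exp).mul
        (((Real.continuous_exp.pow 2).sub (continuous_const.mul Real.continuous_exp)).add
          continuous_const)
    · exact (Real.continuous_exp.add continuous_const).pow 4
    · exact fun x => pow_ne_zero _ (ne_of_gt (den_pos hc x))
  -- derivative chain
  set F1 : ℝ → ℝ := fun t => ∫ ω, (A1 ω * W ω) * G1 c (t * W ω + B) ∂μ with hF1_def
  set F2 : ℝ → ℝ := fun t => ∫ ω, ((A1 ω * W ω) * W ω) * G2 c (t * W ω + B) ∂μ with hF2_def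
  set F3 : ℝ → ℝ :=
    fun t => ∫ ω, (((A1 ω * W ω) * W ω) * W ω) * G3 c (t * W ω + B) ∂μ with hF3_def
  have H0 : ∀ t : ℝ, HasDerivAt (fun t => ∫ ω, A1 ω * G c (t * W ω + B) ∂μ) (F1 t) t :=
    fun t => hasDerivAt_int hWmeas hA1meas hbd1 (hasDerivAt_G hc) hG1c
      (G_abs_le hc) (G1_abs_le hc) B t
  have H1 : ∀ t : ℝ, HasDerivAt F1 (F2 t) t :=
    fun t => hasDerivAt_int hWmeas hA2meas hbd2 (hasDerivAt_G1 hc) hG2c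
      (G1_abs_le hc) (G2_abs_le hc) B t
  have H2 : ∀ t : ℝ, HasDerivAt F2 (F3 t) t :=
    fun t => hasDerivAt_int hWmeas hA3meas hbd3 (hasDerivAt_G2 hc) hG3c
      (G2_abs_le hc) (G3_abs_le hc) B t
  have hFeq : Ffun μ W q B = fun t => ∫ ω, A1 ω * G c (t * W ω + B) ∂μ := by
    funext t
    unfold Ffun
    rw [← hI_def]
    congr 1
    funext ω
    simp only [hA1_def, G, hc_def]
    have he : Real.exp (t * W ω + B) + (q:ℝ) - 1
        = Real.exp (t * W ω + B) + ((q:ℝ) - 1) := by ring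
    rw [he, mul_div_assoc]
  have hd2 : deriv (deriv (Ffun μ W q B)) = F2 := by
    have hd1 : deriv (Ffun μ W q B) = F1 := by
      rw [hFeq]; funext t; exact (H0 t).deriv
    rw [hd1]; funext t; exact (H1 t).deriv
  rw [hd2]
  -- crossing thresholds
  set t₀ : ℝ := ℓ / w with ht₀_def
  set t₁ : ℝ := ℓ / w' with ht₁_def
  have ht₀pos : 0 < t₀ := div_pos hℓ hw0
  have ht₀₁ : t₀ ≤ t₁ := by
    apply div_le_div_of_nonneg_left hℓ.le hw' hw'w
  -- ratio inequality in usable form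
  have hr' : ℓ * w ≤ (ℓ + L) * w' := by
    have h1 : w ≤ (1 + L / ℓ) * w' := (div_le_iff₀ hw').mp hratio
    have h2 : ℓ * ((1 + L / ℓ) * w') = (ℓ + L) * w' := by field_simp
    calc ℓ * w ≤ ℓ * ((1 + L / ℓ) * w') := mul_le_mul_of_nonneg_left h1 hℓ.le
    _ = (ℓ + L) * w' := h2
  -- integrability of the F2 integrand
  have hF2int : ∀ t : ℝ, Integrable (fun ω => ((A1 ω * W ω) * W ω) * G2 c (t * W ω + B)) μ := by
    intro t
    refine integrable_of_bound
      ((hA3meas.mul (hG2c.measurable.comp ((hWmeas.const_mul t).add_const B))).aestronglyMeasurable)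
      (C := ((w / I) * w) * w * 2) (hbd3.mono fun ω hω => ?_)
    rw [abs_mul]
    exact mul_le_mul hω.2 (G2_abs_le hc _) (abs_nonneg _) (by positivity)
  have hF3int : ∀ t : ℝ,
      Integrable (fun ω => (((A1 ω * W ω) * W ω) * W ω) * G3 c (t * W ω + B)) μ := by
    intro t
    refine integrable_of_bound
      (((hA3meas.mul hWmeas).mul
        (hG3c.measurable.comp ((hWmeas.const_mul t).add_const B))).aestronglyMeasurable)
      (C := (((w / I) * w) * w) * w * 8) ?_
    filter_upwards [hbd3] with ω hω
    rw [abs_mul, abs_mul]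
    refine mul_le_mul ?_ (G3_abs_le hc _) (abs_nonneg _) (by positivity)
    exact mul_le_mul hω.2 hω.1 (abs_nonneg _) (by positivity)
  -- a.e. positivity of the weight
  have hApos : ∀ᵐ ω ∂μ, 0 < (A1 ω * W ω) * W ω := by
    filter_upwards [hsupp] with ω hω
    have hWpos : 0 < W ω := lt_of_lt_of_le hw' hω.1
    have : 0 < A1 ω := div_pos hWpos hIpos
    positivity
  -- sign of F2 on (0, t₀)
  have hpos : ∀ t : ℝ, 0 < t → t < t₀ → 0 < F2 t := by
    intro t ht0 htlt
    refine integral_pos_of_ae_pos (hF2int t) ?_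
    filter_upwards [hsupp, hApos] with ω hω hA
    refine mul_pos hA (G2_pos hc ?_)
    have h1 : t * W ω ≤ t * w := mul_le_mul_of_nonneg_left hω.2 ht0.le
    have h2 : t * w < t₀ * w := mul_lt_mul_of_pos_right htlt hw0
    have h3 : t₀ * w = ℓ := div_mul_cancel₀ ℓ (ne_of_gt hw0)
    have hx : t * W ω + B < Real.log c := by rw [hl_def] at h3; linarith
    have := Real.exp_lt_exp.mpr hx
    rwa [Real.exp_log hc0] at this
  -- sign of F2 past t₁
  have hneg : ∀ t : ℝ, t₁ < t → F2 t < 0 := by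
    intro t ht
    have ht0 : 0 < t := lt_trans (lt_of_lt_of_le ht₀pos ht₀₁) ht
    refine integral_neg_of_ae_neg (hF2int t) ?_
    filter_upwards [hsupp, hApos] with ω hω hA
    refine mul_neg_of_pos_of_neg hA (G2_neg hc ?_)
    have h1 : t * w' ≤ t * W ω := mul_le_mul_of_nonneg_left hω.1 ht0.le
    have h2 : t₁ * w' < t * w' := mul_lt_mul_of_pos_right ht hw'
    have h3 : t₁ * w' = ℓ := div_mul_cancel₀ ℓ (ne_of_gt hw')
    have hx : Real.log c < t * W ω + B := by rw [hl_def] at h3; linarith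
    have := Real.exp_lt_exp.mpr hx
    rwa [Real.exp_log hc0] at this
  -- F2 t₀ is nonnegative
  have hF2t₀ : 0 ≤ F2 t₀ := by
    refine integral_nonneg_of_ae ?_
    filter_upwards [hsupp, hApos] with ω hω hA
    refine mul_nonneg hA.le (G2_nonneg hc ?_)
    have h1 : t₀ * W ω ≤ t₀ * w := mul_le_mul_of_nonneg_left hω.2 ht₀pos.le
    have h3 : t₀ * w = ℓ := div_mul_cancel₀ ℓ (ne_of_gt hw0)
    have hx : t₀ * W ω + B ≤ Real.log c := by rw [hl_def] at h3; linarith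
    calc Real.exp (t₀ * W ω + B) ≤ Real.exp (Real.log c) := Real.exp_le_exp.mpr hx
    _ = c := Real.exp_log hc0
  -- F2 is strictly decreasing on [t₀, t₁]
  have hanti : StrictAntiOn F2 (Icc t₀ t₁) := by
    refine strictAntiOn_of_deriv_neg (convex_Icc _ _) ?_ ?_
    · refine Continuous.continuousOn ?_
      rw [continuous_iff_continuousAt]; exact fun t => (H2 t).continuousAt
    · intro t ht
      rw [interior_Icc] at ht
      rw [(H2 t).deriv]
      refine integral_neg_of_ae_neg (hF3int t) ?_
      filter_upwards [hsupp, hApos] with ω hω hA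
      have hWpos : 0 < W ω := lt_of_lt_of_le hw' hω.1
      refine mul_neg_of_pos_of_neg (mul_pos hA hWpos) (G3_neg hc ?_ ?_)
      · -- lower bound : log c - L < t W + B
        have h1 : t * w' ≤ t * W ω :=
          mul_le_mul_of_nonneg_left hω.1 (le_of_lt (lt_trans ht₀pos ht.1))
        have h2 : t₀ * w' < t * w' := mul_lt_mul_of_pos_right ht.1 hw'
        have h3 : (ℓ - L) * w ≤ ℓ * w' := by nlinarith [mul_le_mul_of_nonneg_left hw'w hL.le]
        have h4 : ℓ - L ≤ t₀ * w' := by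
          rw [ht₀_def, div_mul_eq_mul_div, le_div_iff₀ hw0]
          linarith
        have : ℓ - L < t * W ω := by linarith
        rw [hl_def] at this; linarith
      · -- upper bound : t W + B < log c + L
        have h1 : t * W ω ≤ t * w :=
          mul_le_mul_of_nonneg_left hω.2 (le_of_lt (lt_trans ht₀pos ht.1))
        have h2 : t * w < t₁ * w := mul_lt_mul_of_pos_right ht.2 hw0
        have h4 : t₁ * w ≤ ℓ + L := by
          rw [ht₁_def, div_mul_eq_mul_div, div_le_iff₀ hw']
          linarith
        have : t * W ω < ℓ + L := by linarith
        rw [hl_def] at this; linarith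
  -- assemble the crossing point
  set S : Set ℝ := {t | t ∈ Icc t₀ t₁ ∧ 0 ≤ F2 t} with hS_def
  have hS0 : t₀ ∈ S := ⟨⟨le_refl _, ht₀₁⟩, hF2t₀⟩
  have hSne : S.Nonempty := ⟨t₀, hS0⟩
  have hSb : BddAbove S := ⟨t₁, fun t ht => ht.1.2⟩
  refine ⟨sSup S, lt_of_lt_of_le ht₀pos (le_csSup hSb hS0), ?_, ?_⟩
  · intro t ht0 htlt
    by_cases h : t < t₀
    · exact hpos t ht0 h
    · push_neg at h
      obtain ⟨s, hsS, hts⟩ := exists_lt_of_lt_csSup hSne htlt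
      have hF2ts : F2 s < F2 t :=
        hanti ⟨h, le_trans hts.le hsS.1.2⟩ hsS.1 hts
      linarith [hsS.2]
  · intro t ht
    by_cases h : t₁ < t
    · exact hneg t h
    · push_neg at h
      have htmem : t ∈ Icc t₀ t₁ := ⟨le_trans (le_csSup hSb hS0) ht.le, h⟩
      by_contra hge
      push_neg at hge
      have : t ∈ S := ⟨htmem, hge⟩
      exact absurd (le_csSup hSb this) (not_le.mpr ht)
end
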